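/- Let G be a bipartite graph of order n with vertex set V, and S ⊆ V. Then the self-loop energies satisfy 𝓔(G_S) = 𝓔(G_{V∖S}), where 𝓔(G_S) = Σᵢ |λᵢ(G_S) − σ/n| with σ = |S|. -/

import Mathlib

open Matrix Finset

/-- The diagonal 0-1 matrix indicating the loop vertices in `S`. -/
def loopMat (n : ℕ) (S : Finset (Fin n)) : Matrix (Fin n) (Fin n) ℝ :=
  Matrix.of fun i j => if i = j ∧ i ∈ S then 1 else 0

open Polynomial

section Aux

variable {m : Type*} [Fintype m] [DecidableEq m]

/-- charpoly is invariant under conjugation by a two-sided inverse pair. -/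
lemma charpoly_conj (P Q M : Matrix m m ℝ) (h1 : P * Q = 1) :
    (P * M * Q).charpoly = M.charpoly := by
  let f : Matrix m m ℝ →+* Matrix m m ℝ[X] := (Polynomial.C : ℝ →+* ℝ[X]).mapMatrix
  have key : charmatrix (P * M * Q) = f P * charmatrix M * f Q := by
    unfold charmatrix
    rw [mul_sub, sub_mul]
    congr 1
    · symm
      rw [← (scalar_commute (X : ℝ[X]) (Commute.all _) (f P)).eq, mul_assoc,
        ← RingHom.map_mul f, h1, RingHom.map_one, mul_one]
    · simp only [RingHom.mapMatrix_apply, f, ← Matrix.map_mul]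
  have hdet : (f P).det * (f Q).det = 1 := by
    rw [← det_mul, ← RingHom.map_mul f, h1, RingHom.map_one, det_one]
  rw [Matrix.charpoly, key, det_mul, det_mul, Matrix.charpoly]
  ring_nf
  rw [mul_comm, ← mul_assoc, mul_comm (f Q).det, hdet, one_mul]

lemma charpoly_diagonal (d : m → ℝ) :
    (Matrix.diagonal d).charpoly = ∏ i, (X - C (d i)) := by
  have : charmatrix (Matrix.diagonal d) = Matrix.diagonal (fun i => (X : ℝ[X]) - C (d i)) := by
    ext i j
    by_cases h : i = j
    · subst h; simp [charmatrix_apply_eq]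
    · simp [charmatrix_apply_ne _ _ _ h, Matrix.diagonal_apply_ne _ h]
  rw [Matrix.charpoly, this, det_diagonal]

/-- Charpoly of a real symmetric matrix is the product over its eigenvalues. -/
lemma charpoly_eq_prod_eigenvalues {M : Matrix m m ℝ} (hM : M.IsHermitian) :
    M.charpoly = ∏ i, (X - C (hM.eigenvalues i)) := by
  have hU := (Matrix.mem_unitaryGroup_iff).mp (hM.eigenvectorUnitary).2
  calc M.charpoly
      = ((hM.eigenvectorUnitary : Matrix m m ℝ) * Matrix.diagonal (RCLike.ofReal ∘ hM.eigenvalues)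
        * (star (hM.eigenvectorUnitary : Matrix m m ℝ))).charpoly := by
        exact congrArg Matrix.charpoly hM.spectral_theorem
    _ = (Matrix.diagonal (RCLike.ofReal ∘ hM.eigenvalues)).charpoly := charpoly_conj _ _ _ hU
    _ = ∏ i, (X - C (hM.eigenvalues i)) := by
        rw [_root_.charpoly_diagonal]; rfl

lemma multiset_map_eq_of_prod_eq (f g : m → ℝ)
    (h : ∏ i, (X - C (f i)) = ∏ i, (X - C (g i))) :
    Multiset.map f Finset.univ.val = Multiset.map g Finset.univ.val := by
  have hf : ∏ i, (X - C (f i)) = ((Finset.univ.val.map f).map fun a => X - C a).prod := by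
    rw [Multiset.map_map]; rfl
  have hg : ∏ i, (X - C (g i)) = ((Finset.univ.val.map g).map fun a => X - C a).prod := by
    rw [Multiset.map_map]; rfl
  have := congrArg Polynomial.roots (hf.symm.trans (h.trans hg))
  rwa [roots_multiset_prod_X_sub_C, roots_multiset_prod_X_sub_C] at this

lemma sum_comp_eq_of_multiset_map_eq (f g : m → ℝ) (φ : ℝ → ℝ)
    (h : Multiset.map f Finset.univ.val = Multiset.map g Finset.univ.val) :
    ∑ i, φ (f i) = ∑ i, φ (g i) := by
  have h2 := congrArg (fun s => (Multiset.map φ s).sum) h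
  simp only [Multiset.map_map, Function.comp] at h2
  rw [Finset.sum, Finset.sum]
  exact h2

end Aux

/-- for a bipartite graph `G` of order `n` and any `S ⊆ V(G)`, the self-loop
energies coincide: `𝓔(G_S) = 𝓔(G_{V∖S})`, where
`𝓔(G_S) = Σᵢ |λᵢ(G_S) − σ/n|` with `σ = |S|`. -/
theorem bipartite_selfLoop_energy_eq (n : ℕ) (G : SimpleGraph (Fin n))
    [DecidableRel G.Adj] (hbip : G.Colorable 2) (S : Finset (Fin n))
    (hA : (G.adjMatrix ℝ + loopMat n S).IsHermitian)
    (hB : (G.adjMatrix ℝ + loopMat n Sᶜ).IsHermitian) :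
    (∑ i, |hA.eigenvalues i - (S.card : ℝ) / n|) =
      ∑ i, |hB.eigenvalues i - (Sᶜ.card : ℝ) / n| := by
  rcases Nat.eq_zero_or_pos n with hn | hn
  · subst hn; simp
  set A := G.adjMatrix ℝ + loopMat n S with hAdef
  set B := G.adjMatrix ℝ + loopMat n Sᶜ with hBdef
  obtain ⟨c⟩ := hbip
  set d : Fin n → ℝ := fun i => if c i = 0 then 1 else -1 with hddef
  have hd2 : ∀ i, d i * d i = 1 := by
    intro i; by_cases h : c i = 0 <;> simp [hddef, h]
  set D : Matrix (Fin n) (Fin n) ℝ := Matrix.diagonal d with hDdef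
  have hDD : D * D = 1 := by
    rw [hDdef, Matrix.diagonal_mul_diagonal]
    have : (fun i => d i * d i) = fun _ => (1 : ℝ) := funext hd2
    rw [this, Matrix.diagonal_one]
  have hdij : ∀ x y : Fin 2, x ≠ y →
      (if x = 0 then (1:ℝ) else -1) * (if y = 0 then 1 else -1) = -1 := by
    intro x y hxy
    fin_cases x <;> fin_cases y <;> simp_all
  have hentry : ∀ (M : Matrix (Fin n) (Fin n) ℝ) i j, (D * M * D) i j = d i * M i j * d j := by
    intro M i j
    rw [hDdef, Matrix.mul_diagonal, Matrix.diagonal_mul]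
  have hkey : D * ((1 : Matrix (Fin n) (Fin n) ℝ) - A) * D = B := by
    ext i j
    rw [hentry]
    simp only [Matrix.sub_apply, Matrix.add_apply, Matrix.one_apply,
      SimpleGraph.adjMatrix_apply, hAdef, hBdef, loopMat, Matrix.of_apply]
    by_cases hij : i = j
    · subst hij
      have hni : ¬ G.Adj i i := G.irrefl
      have hmul : ∀ x : ℝ, d i * x * d i = x := fun x => by
        rw [mul_comm (d i) x, mul_assoc, hd2, mul_one]
      by_cases hS : i ∈ S <;>
        simp [hni, hS, hmul, hd2 i]
    · have hij' : ¬ (i = j ∧ i ∈ S) := fun h => hij h.1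
      have hij'' : ¬ (i = j ∧ i ∈ Sᶜ) := fun h => hij h.1
      by_cases hadj : G.Adj i j
      · have hcol : c i ≠ c j := c.valid hadj
        have hd := hdij _ _ hcol
        simp only [if_neg hij, if_neg hij', if_neg hij'', if_pos hadj, hddef]
        linear_combination -hd
      · simp [hij, hij', hij'', hadj]
  set U : Matrix (Fin n) (Fin n) ℝ := (hA.eigenvectorUnitary : Matrix (Fin n) (Fin n) ℝ) with hUdef
  have hU1 : U * star U = 1 := mem_unitaryGroup_iff.mp hA.eigenvectorUnitary.2
  have h1A : (1 : Matrix (Fin n) (Fin n) ℝ) - A =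
      U * Matrix.diagonal (fun i => 1 - hA.eigenvalues i) * star U := by
    have hdg : Matrix.diagonal (fun i => (1:ℝ) - hA.eigenvalues i)
        = 1 - Matrix.diagonal (RCLike.ofReal ∘ hA.eigenvalues) := by
      rw [← Matrix.diagonal_one, Matrix.diagonal_sub]; rfl
    rw [hdg, Matrix.mul_sub, Matrix.mul_one, Matrix.sub_mul, hU1]
    exact congrArg (fun x => 1 - x) hA.spectral_theorem
  have hBcp : B.charpoly = ∏ i, (X - C (1 - hA.eigenvalues i)) := by
    rw [← hkey, charpoly_conj _ _ _ hDD, h1A, charpoly_conj _ _ _ hU1, _root_.charpoly_diagonal]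
  have hprod : ∏ i, (X - C (hB.eigenvalues i)) = ∏ i, (X - C (1 - hA.eigenvalues i)) :=
    (charpoly_eq_prod_eigenvalues hB).symm.trans hBcp
  have hms := multiset_map_eq_of_prod_eq _ _ hprod
  have hsum := sum_comp_eq_of_multiset_map_eq _ _ (fun x => |x - (Sᶜ.card : ℝ)/n|) hms
  have hcard : S.card ≤ n := by
    simpa using S.card_le_univ
  have hcompl : (Sᶜ.card : ℝ) = (n : ℝ) - S.card := by
    rw [Finset.card_compl, Fintype.card_fin, Nat.cast_sub hcard]
  have hn' : (n : ℝ) ≠ 0 := Nat.cast_ne_zero.mpr hn.ne'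
  rw [hsum]
  apply Finset.sum_congr rfl
  intro i _
  have heq : (1:ℝ) - hA.eigenvalues i - (((n:ℝ) - S.card)/n)
      = S.card/n - hA.eigenvalues i := by field_simp; ring
  simp only [hcompl, heq, abs_sub_comm]
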